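/- Let k > 0 and let E ⊆ ℝ be a measurable set with ∫_E cosh(ks) ds < ∞. Then ∫_E ds / cosh(ks) ≤ (2/k)·arctan( (k/2)·∫_E cosh(ks) ds ). Equality holds when E is an interval symmetric about 0. -/

import Mathlib

open MeasureTheory Set

private lemma hasDerivAt_sinh_div (k : ℝ) (hk : k ≠ 0) (x : ℝ) :
    HasDerivAt (fun s => Real.sinh (k*s) / k) (Real.cosh (k*x)) x := by
  have h : HasDerivAt (fun s : ℝ => k * s) k x := by
    simpa using (hasDerivAt_id x).const_mul k
  have h1 := ((Real.hasDerivAt_sinh (k*x)).comp x h).div_const k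
  refine h1.congr_deriv ?_
  field_simp

private lemma hasDerivAt_arctan_sinh (k : ℝ) (hk : k ≠ 0) (x : ℝ) :
    HasDerivAt (fun s => Real.arctan (Real.sinh (k*s)) / k) (1 / Real.cosh (k*x)) x := by
  have h : HasDerivAt (fun s : ℝ => k * s) k x := by
    simpa using (hasDerivAt_id x).const_mul k
  have h1 := ((Real.hasDerivAt_arctan (Real.sinh (k*x))).comp x
      ((Real.hasDerivAt_sinh (k*x)).comp x h)).div_const k
  refine h1.congr_deriv ?_
  have hc : Real.cosh (k*x) ≠ 0 := (Real.cosh_pos _).ne'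
  have hsq : 1 + Real.sinh (k*x) ^ 2 = Real.cosh (k*x) ^ 2 := by
    rw [Real.cosh_sq]; ring
  rw [hsq]
  field_simp

private lemma cont_cosh (k : ℝ) : Continuous fun s : ℝ => Real.cosh (k*s) :=
  Real.continuous_cosh.comp (continuous_const.mul continuous_id)

private lemma cont_sech (k : ℝ) : Continuous fun s : ℝ => 1 / Real.cosh (k*s) :=
  continuous_const.div (cont_cosh k) (fun x => (Real.cosh_pos _).ne')

private lemma integral_cosh_Ioo (k W : ℝ) (hk : 0 < k) (hW : 0 ≤ W) :
    ∫ s in Ioo (-W) W, Real.cosh (k*s) = 2 / k * Real.sinh (k*W) := by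
  rw [← integral_Ioc_eq_integral_Ioo, ← intervalIntegral.integral_of_le (by linarith)]
  rw [intervalIntegral.integral_eq_sub_of_hasDerivAt
    (fun x _ => hasDerivAt_sinh_div k hk.ne' x) ((cont_cosh k).intervalIntegrable _ _)]
  rw [mul_neg, Real.sinh_neg]
  field_simp
  ring

private lemma integral_sech_Ioo (k W : ℝ) (hk : 0 < k) (hW : 0 ≤ W) :
    ∫ s in Ioo (-W) W, 1 / Real.cosh (k*s) = 2 / k * Real.arctan (Real.sinh (k*W)) := by
  rw [← integral_Ioc_eq_integral_Ioo, ← intervalIntegral.integral_of_le (by linarith)]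
  rw [intervalIntegral.integral_eq_sub_of_hasDerivAt
    (fun x _ => hasDerivAt_arctan_sinh k hk.ne' x) ((cont_sech k).intervalIntegrable _ _)]
  rw [mul_neg, Real.sinh_neg, Real.arctan_neg]
  field_simp
  ring

private lemma bathtub (k W : ℝ) (hk : 0 < k) (hW : 0 ≤ W) (E : Set ℝ) (hE : MeasurableSet E)
    (hfin : IntegrableOn (fun s => Real.cosh (k*s)) E)
    (hL : ∫ s in E, Real.cosh (k*s) = ∫ s in Ioo (-W) W, Real.cosh (k*s)) :
    ∫ s in E, 1 / Real.cosh (k*s) ≤ ∫ s in Ioo (-W) W, 1 / Real.cosh (k*s) := by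
  set I : Set ℝ := Ioo (-W) W with hIdef
  have hI : MeasurableSet I := measurableSet_Ioo
  set c := Real.cosh (k*W) with hcdef
  have hc : 0 < c := Real.cosh_pos _
  -- integrability facts
  have hIcosh : IntegrableOn (fun s => Real.cosh (k*s)) I :=
    ((cont_cosh k).integrableOn_Icc).mono_set Ioo_subset_Icc_self
  have hIsech : IntegrableOn (fun s => 1 / Real.cosh (k*s)) I :=
    ((cont_sech k).integrableOn_Icc).mono_set Ioo_subset_Icc_self
  have hEsech : IntegrableOn (fun s => 1 / Real.cosh (k*s)) E := by
    refine Integrable.mono hfin ((cont_sech k).aestronglyMeasurable.restrict) ?_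
    filter_upwards with x
    have h1 : (0:ℝ) < Real.cosh (k*x) := Real.cosh_pos _
    have h2 : (1:ℝ) ≤ Real.cosh (k*x) := Real.one_le_cosh _
    rw [Real.norm_eq_abs, Real.norm_eq_abs, abs_of_pos h1, abs_of_pos (by positivity)]
    calc 1 / Real.cosh (k*x) ≤ 1 := by
          rw [div_le_one h1]; exact h2
      _ ≤ Real.cosh (k*x) := h2
  -- decompositions
  have hdisj1 : Disjoint (E ∩ I) (E \ I) := disjoint_sdiff_self_right.mono_left inter_subset_right
  have hdisj2 : Disjoint (E ∩ I) (I \ E) := disjoint_sdiff_self_right.mono_left inter_subset_left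
  have hEeq : (E ∩ I) ∪ (E \ I) = E := inter_union_diff E I
  have hIeq : (E ∩ I) ∪ (I \ E) = I := by rw [inter_comm]; exact inter_union_diff I E
  have hmEI : MeasurableSet (E \ I) := hE.diff hI
  have hmIE : MeasurableSet (I \ E) := hI.diff hE
  -- split integrals
  have splitE : ∀ f : ℝ → ℝ, IntegrableOn f E →
      ∫ s in E, f s = (∫ s in E ∩ I, f s) + ∫ s in E \ I, f s := by
    intro f hf
    conv_lhs => rw [← hEeq]
    exact setIntegral_union hdisj1 hmEI (hf.mono_set inter_subset_left)
      (hf.mono_set diff_subset)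
  have splitI : ∀ f : ℝ → ℝ, IntegrableOn f I →
      ∫ s in I, f s = (∫ s in E ∩ I, f s) + ∫ s in I \ E, f s := by
    intro f hf
    conv_lhs => rw [← hIeq]
    exact setIntegral_union hdisj2 hmIE (hf.mono_set inter_subset_right)
      (hf.mono_set diff_subset)
  -- equal cosh masses outside
  have hmass : ∫ s in E \ I, Real.cosh (k*s) = ∫ s in I \ E, Real.cosh (k*s) := by
    have h1 := splitE _ hfin
    have h2 := splitI _ hIcosh
    rw [hL] at h1
    linarith [h1, h2]
  -- pointwise bounds
  have hout : ∀ s ∈ E \ I, c ≤ Real.cosh (k*s) := by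
    intro s hs
    have hnot : ¬ ((-W) < s ∧ s < W) := fun h => hs.2 h
    have habs : W ≤ |s| := by
      rcases lt_or_ge s 0 with h | h
      · rw [abs_of_neg h]; by_contra hcon; push_neg at hcon; exact hnot ⟨by linarith, by linarith⟩
      · rw [abs_of_nonneg h]; by_contra hcon; push_neg at hcon; exact hnot ⟨by linarith, by linarith⟩
    rw [hcdef, Real.cosh_le_cosh, abs_mul, abs_mul, abs_of_pos hk, abs_of_nonneg hW]
    exact mul_le_mul_of_nonneg_left habs hk.le
  have hin : ∀ s ∈ I \ E, Real.cosh (k*s) ≤ c := by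
    intro s hs
    have h1 : -W < s := hs.1.1
    have h2 : s < W := hs.1.2
    rw [hcdef, Real.cosh_le_cosh, abs_mul, abs_mul, abs_of_pos hk, abs_of_nonneg hW]
    refine mul_le_mul_of_nonneg_left ?_ hk.le
    rw [abs_le]; constructor <;> linarith
  -- comparison on outside pieces
  have h2 : ∫ s in E \ I, 1 / Real.cosh (k*s) ≤ (∫ s in E \ I, Real.cosh (k*s)) / c^2 := by
    rw [← integral_div]
    refine setIntegral_mono_on (hEsech.mono_set diff_subset)
      ((hfin.mono_set diff_subset).div_const _) hmEI ?_
    intro x hx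
    have hy : 0 < Real.cosh (k*x) := Real.cosh_pos _
    have := hout x hx
    rw [div_le_div_iff₀ hy (by positivity)]
    nlinarith
  have h3 : (∫ s in I \ E, Real.cosh (k*s)) / c^2 ≤ ∫ s in I \ E, 1 / Real.cosh (k*s) := by
    rw [← integral_div]
    refine setIntegral_mono_on ((hIcosh.mono_set diff_subset).div_const _)
      (hIsech.mono_set diff_subset) hmIE ?_
    intro x hx
    have hy : 0 < Real.cosh (k*x) := Real.cosh_pos _
    have := hin x hx
    rw [div_le_div_iff₀ (by positivity) hy]
    nlinarith
  have e1 := splitE _ hEsech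
  have e2 := splitI _ hIsech
  rw [hmass] at h2
  linarith

/-- For `k > 0` and a measurable set `E ⊆ ℝ` with
`∫_E cosh (k s) ds < ∞`, one has
`∫_E ds / cosh (k s) ≤ (2/k) · arctan ((k/2) · ∫_E cosh (k s) ds)`,
with equality when `E` is an interval symmetric about `0`. -/
theorem integral_one_div_cosh_le_of_measurable (k : ℝ) (hk : 0 < k)
    (E : Set ℝ) (hE : MeasurableSet E)
    (hfin : IntegrableOn (fun s => Real.cosh (k * s)) E) :
    (∫ s in E, 1 / Real.cosh (k * s)) ≤
        (2 / k) * Real.arctan ((k / 2) * ∫ s in E, Real.cosh (k * s)) ∧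
    ∀ W : ℝ, 0 ≤ W →
      (∫ s in Ioo (-W) W, 1 / Real.cosh (k * s)) =
        (2 / k) * Real.arctan ((k / 2) * ∫ s in Ioo (-W) W, Real.cosh (k * s)) := by
  have hrhs : ∀ W : ℝ, 0 ≤ W →
      (∫ s in Ioo (-W) W, 1 / Real.cosh (k * s)) =
        (2 / k) * Real.arctan ((k / 2) * ∫ s in Ioo (-W) W, Real.cosh (k * s)) := by
    intro W hW
    rw [integral_cosh_Ioo k W hk hW, integral_sech_Ioo k W hk hW]
    congr 2
    field_simp
  refine ⟨?_, hrhs⟩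
  set L := ∫ s in E, Real.cosh (k * s) with hLdef
  have hL0 : 0 ≤ L := setIntegral_nonneg hE (fun x _ => (Real.cosh_pos _).le)
  set W := Real.arsinh (k * L / 2) / k with hWdef
  have hW0 : 0 ≤ W := by
    apply div_nonneg _ hk.le
    rw [← Real.arsinh_zero]
    exact Real.arsinh_le_arsinh.mpr (by positivity)
  have hsinh : Real.sinh (k * W) = k * L / 2 := by
    rw [hWdef, mul_div_cancel₀ _ hk.ne', Real.sinh_arsinh]
  have hLI : L = ∫ s in Ioo (-W) W, Real.cosh (k * s) := by
    rw [integral_cosh_Ioo k W hk hW0, hsinh]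
    field_simp
  calc (∫ s in E, 1 / Real.cosh (k * s))
      ≤ ∫ s in Ioo (-W) W, 1 / Real.cosh (k * s) :=
        bathtub k W hk hW0 E hE hfin hLI
    _ = (2 / k) * Real.arctan ((k / 2) * L) := by rw [hrhs W hW0, ← hLI]
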